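/- Let \(q_1, \dots, q_N\) be unit quaternions and \(w_1, \dots, w_N \ge 0\) be weights. Set \(J = \sum_{m=1}^N w_m \Phi(q_m)\) (a real 3×3 matrix) and \(Q = \sum_{m=1}^N w_m \big(q_m \otimes q_m - \tfrac{1}{4} I_4\big)\) (a real symmetric trace-free 4×4 matrix). Assume \(\det J > 0\), and let \(\bar q\) be any unit eigenvector of \(Q\) associated with its maximal eigenvalue. Then \(\Phi(\bar q) = \mathrm{PD}(J)\), the orthogonal factor in the polar decomposition of \(J\). -/

import Mathlib

open scoped Matrix Quaternion

noncomputable section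

/-- The space of real 3×3 matrices. -/
abbrev Mat3 := Matrix (Fin 3) (Fin 3) ℝ

/-- The purely imaginary quaternion associated with a vector of `ℝ³`. -/
def quatOfVec (v : Fin 3 → ℝ) : Quaternion ℝ := ⟨0, v 0, v 1, v 2⟩

/-- The vector of `ℝ³` formed by the imaginary parts of a quaternion. -/
def vecOfQuat (x : Quaternion ℝ) : Fin 3 → ℝ := ![x.imI, x.imJ, x.imK]

/-- The 3×3 real matrix of the linear map `u ↦ Im (q u q*)` on
`ℝ³ ≃ {purely imaginary quaternions}`.  For a unit quaternion `q` this is the rotation matrix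
associated with `q`. -/
def Phi (q : Quaternion ℝ) : Mat3 :=
  Matrix.of fun i j => vecOfQuat (q * quatOfVec (Pi.single j 1) * star q) i

/-- The Euclidean inner product of two quaternions, seen as vectors of `ℝ⁴`. -/
def qdot (p q : Quaternion ℝ) : ℝ :=
  p.re * q.re + p.imI * q.imI + p.imJ * q.imJ + p.imK * q.imK

/-- The vector of `ℝ⁴` of components of a quaternion. -/
def qcomp (q : Quaternion ℝ) : Fin 4 → ℝ := ![q.re, q.imI, q.imJ, q.imK]

/-- Averaging of rotations: equivalence of the polar-decomposition procedure (on the weighted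
average `J` of rotation matrices) and the maximal-eigenvector procedure (on the weighted
average `Q` of Q-tensors).  If `det J > 0` and `q̄` is a unit eigenvector of `Q` for its
maximal eigenvalue, then `Φ(q̄) = PD(J)`, the orthogonal factor of the polar decomposition
of `J`. -/
lemma Phi_eq (q : Quaternion ℝ) : Phi q =
    !![q.re^2 + q.imI^2 - q.imJ^2 - q.imK^2, 2*(q.imI*q.imJ - q.re*q.imK), 2*(q.imI*q.imK + q.re*q.imJ);
       2*(q.imI*q.imJ + q.re*q.imK), q.re^2 - q.imI^2 + q.imJ^2 - q.imK^2, 2*(q.imJ*q.imK - q.re*q.imI);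
       2*(q.imI*q.imK - q.re*q.imJ), 2*(q.imJ*q.imK + q.re*q.imI), q.re^2 - q.imI^2 - q.imJ^2 + q.imK^2] := by
  ext i j
  fin_cases i <;> fin_cases j <;>
    simp [Phi, vecOfQuat, Quaternion.re_mul, Quaternion.imI_mul, Quaternion.imJ_mul, Quaternion.imK_mul] <;>
    simp [quatOfVec] <;> ring

lemma Phi_transpose (q : Quaternion ℝ) : (Phi q)ᵀ = Phi (star q) := by
  rw [Phi_eq, Phi_eq]
  ext i j
  fin_cases i <;> fin_cases j <;>
    simp [Matrix.transpose_apply] <;> ring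

lemma trace_Phi_mul (p q : Quaternion ℝ) :
    ((Phi p)ᵀ * Phi q).trace =
      4 * qdot p q ^ 2 - Quaternion.normSq p * Quaternion.normSq q := by
  rw [Phi_transpose, Phi_eq, Phi_eq, Matrix.mul_fin_three, Matrix.trace_fin_three_of, qdot,
    Quaternion.normSq_def', Quaternion.normSq_def']
  simp only [Quaternion.re_star, Quaternion.imI_star, Quaternion.imJ_star, Quaternion.imK_star]
  ring

lemma Phi_orthogonal (q : Quaternion ℝ) (hq : Quaternion.normSq q = 1) :
    (Phi q)ᵀ * Phi q = 1 := by
  rw [Quaternion.normSq_def'] at hq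
  rw [Phi_transpose, Phi_eq, Phi_eq, Matrix.mul_fin_three]
  simp only [Quaternion.re_star, Quaternion.imI_star, Quaternion.imJ_star, Quaternion.imK_star]
  ext i j
  fin_cases i <;> fin_cases j <;>
    simp [Matrix.one_apply] <;> nlinarith [hq]

lemma hprod_kk (s t : ℝ) (hs : s * s = t) : s / 2 * (s / 2) = t / 4 := by
  linear_combination hs / 4
lemma hprod_ki (s y : ℝ) (hs0 : s ≠ 0) : s / 2 * (y / (2 * s)) = y / 4 := by
  field_simp; ring
lemma hprod_ik (s y : ℝ) (hs0 : s ≠ 0) : y / (2 * s) * (s / 2) = y / 4 := by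
  field_simp; ring
lemma hprod_ij (n x y s t : ℝ) (hs : s * s = t) (ht : 0 < t) (h : n * t = x * y) :
    x / (2 * s) * (y / (2 * s)) = n / 4 := by
  have hs0 : s ≠ 0 := by
    intro h0; rw [h0, mul_zero] at hs; exact ht.ne hs
  field_simp
  linear_combination (-4 : ℝ) * h - 4 * n * hs

lemma buildQuat (p : Quaternion ℝ) (A : Mat3)
    (h00 : p.re * p.re = (1 + A 0 0 + A 1 1 + A 2 2) / 4)
    (h01 : p.re * p.imI = (A 2 1 - A 1 2) / 4)
    (h02 : p.re * p.imJ = (A 0 2 - A 2 0) / 4)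
    (h03 : p.re * p.imK = (A 1 0 - A 0 1) / 4)
    (h11 : p.imI * p.imI = (1 + A 0 0 - A 1 1 - A 2 2) / 4)
    (h12 : p.imI * p.imJ = (A 0 1 + A 1 0) / 4)
    (h13 : p.imI * p.imK = (A 0 2 + A 2 0) / 4)
    (h22 : p.imJ * p.imJ = (1 - A 0 0 + A 1 1 - A 2 2) / 4)
    (h23 : p.imJ * p.imK = (A 1 2 + A 2 1) / 4)
    (h33 : p.imK * p.imK = (1 - A 0 0 - A 1 1 + A 2 2) / 4) :
    Quaternion.normSq p = 1 ∧ Phi p = A := by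
  constructor
  · rw [Quaternion.normSq_def']
    linear_combination h00 + h11 + h22 + h33
  · rw [Phi_eq]
    ext i j
    fin_cases i <;> fin_cases j <;> simp
    · linear_combination h00 + h11 - h22 - h33
    · linear_combination 2 * h12 - 2 * h03
    · linear_combination 2 * h13 + 2 * h02
    · linear_combination 2 * h12 + 2 * h03
    · linear_combination h00 - h11 + h22 - h33
    · linear_combination 2 * h23 - 2 * h01
    · linear_combination 2 * h13 - 2 * h02
    · linear_combination 2 * h23 + 2 * h01
    · linear_combination h00 - h11 - h22 + h33

lemma exists_phi (A : Mat3) (hA : Aᵀ * A = 1) (hdet : A.det = 1) :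
    ∃ p : Quaternion ℝ, Quaternion.normSq p = 1 ∧ Phi p = A := by
  have hA' : A * Aᵀ = 1 := by rwa [mul_eq_one_comm] at hA
  have hadj : A.adjugate = Aᵀ := by
    calc A.adjugate = (Aᵀ * A) * A.adjugate := by rw [hA, Matrix.one_mul]
      _ = Aᵀ * (A * A.adjugate) := by rw [Matrix.mul_assoc]
      _ = Aᵀ := by rw [Matrix.mul_adjugate, hdet, one_smul, Matrix.mul_one]
  rw [Matrix.adjugate_fin_three] at hadj
  have hr00 : A 0 0 * A 0 0 + A 0 1 * A 0 1 + A 0 2 * A 0 2 = 1 := by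
    simpa [Matrix.mul_apply, Fin.sum_univ_three, Matrix.one_apply] using congrFun (congrFun hA' 0) 0
  have hc00 : A 0 0 * A 0 0 + A 1 0 * A 1 0 + A 2 0 * A 2 0 = 1 := by
    simpa [Matrix.mul_apply, Fin.sum_univ_three, Matrix.one_apply] using congrFun (congrFun hA 0) 0
  have hr01 : A 0 0 * A 1 0 + A 0 1 * A 1 1 + A 0 2 * A 1 2 = 0 := by
    simpa [Matrix.mul_apply, Fin.sum_univ_three, Matrix.one_apply] using congrFun (congrFun hA' 0) 1
  have hc01 : A 0 0 * A 0 1 + A 1 0 * A 1 1 + A 2 0 * A 2 1 = 0 := by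
    simpa [Matrix.mul_apply, Fin.sum_univ_three, Matrix.one_apply] using congrFun (congrFun hA 0) 1
  have hr02 : A 0 0 * A 2 0 + A 0 1 * A 2 1 + A 0 2 * A 2 2 = 0 := by
    simpa [Matrix.mul_apply, Fin.sum_univ_three, Matrix.one_apply] using congrFun (congrFun hA' 0) 2
  have hc02 : A 0 0 * A 0 2 + A 1 0 * A 1 2 + A 2 0 * A 2 2 = 0 := by
    simpa [Matrix.mul_apply, Fin.sum_univ_three, Matrix.one_apply] using congrFun (congrFun hA 0) 2
  have hr11 : A 1 0 * A 1 0 + A 1 1 * A 1 1 + A 1 2 * A 1 2 = 1 := by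
    simpa [Matrix.mul_apply, Fin.sum_univ_three, Matrix.one_apply] using congrFun (congrFun hA' 1) 1
  have hc11 : A 0 1 * A 0 1 + A 1 1 * A 1 1 + A 2 1 * A 2 1 = 1 := by
    simpa [Matrix.mul_apply, Fin.sum_univ_three, Matrix.one_apply] using congrFun (congrFun hA 1) 1
  have hr12 : A 1 0 * A 2 0 + A 1 1 * A 2 1 + A 1 2 * A 2 2 = 0 := by
    simpa [Matrix.mul_apply, Fin.sum_univ_three, Matrix.one_apply] using congrFun (congrFun hA' 1) 2
  have hc12 : A 0 1 * A 0 2 + A 1 1 * A 1 2 + A 2 1 * A 2 2 = 0 := by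
    simpa [Matrix.mul_apply, Fin.sum_univ_three, Matrix.one_apply] using congrFun (congrFun hA 1) 2
  have hr22 : A 2 0 * A 2 0 + A 2 1 * A 2 1 + A 2 2 * A 2 2 = 1 := by
    simpa [Matrix.mul_apply, Fin.sum_univ_three, Matrix.one_apply] using congrFun (congrFun hA' 2) 2
  have hc22 : A 0 2 * A 0 2 + A 1 2 * A 1 2 + A 2 2 * A 2 2 = 1 := by
    simpa [Matrix.mul_apply, Fin.sum_univ_three, Matrix.one_apply] using congrFun (congrFun hA 2) 2
  have hf00 : A 1 1 * A 2 2 - A 1 2 * A 2 1 = A 0 0 := by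
    simpa using congrFun (congrFun hadj 0) 0
  have hf01 : -(A 0 1 * A 2 2) + A 0 2 * A 2 1 = A 1 0 := by
    simpa using congrFun (congrFun hadj 0) 1
  have hf02 : A 0 1 * A 1 2 - A 0 2 * A 1 1 = A 2 0 := by
    simpa using congrFun (congrFun hadj 0) 2
  have hf10 : -(A 1 0 * A 2 2) + A 1 2 * A 2 0 = A 0 1 := by
    simpa using congrFun (congrFun hadj 1) 0
  have hf11 : A 0 0 * A 2 2 - A 0 2 * A 2 0 = A 1 1 := by
    simpa using congrFun (congrFun hadj 1) 1
  have hf12 : -(A 0 0 * A 1 2) + A 0 2 * A 1 0 = A 2 1 := by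
    simpa using congrFun (congrFun hadj 1) 2
  have hf20 : A 1 0 * A 2 1 - A 1 1 * A 2 0 = A 0 2 := by
    simpa using congrFun (congrFun hadj 2) 0
  have hf21 : -(A 0 0 * A 2 1) + A 0 1 * A 2 0 = A 1 2 := by
    simpa using congrFun (congrFun hadj 2) 1
  have hf22 : A 0 0 * A 1 1 - A 0 1 * A 1 0 = A 2 2 := by
    simpa using congrFun (congrFun hadj 2) 2
  have hm0_11 : (1 + A 0 0 - A 1 1 - A 2 2) * (1 + A 0 0 + A 1 1 + A 2 2) = (A 2 1 - A 1 2) * (A 2 1 - A 1 2) := by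
    linear_combination hc00 + (-1 : ℝ) * hr11 + (-1 : ℝ) * hr22 + (-2/1 : ℝ) * hf00
  have hm0_12 : (A 0 1 + A 1 0) * (1 + A 0 0 + A 1 1 + A 2 2) = (A 2 1 - A 1 2) * (A 0 2 - A 2 0) := by
    linear_combination hr01 + hc01 + (-1 : ℝ) * hf01 + (-1 : ℝ) * hf10
  have hm0_13 : (A 0 2 + A 2 0) * (1 + A 0 0 + A 1 1 + A 2 2) = (A 2 1 - A 1 2) * (A 1 0 - A 0 1) := by
    linear_combination hr02 + hc02 + (-1 : ℝ) * hf02 + (-1 : ℝ) * hf20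
  have hm0_22 : (1 - A 0 0 + A 1 1 - A 2 2) * (1 + A 0 0 + A 1 1 + A 2 2) = (A 0 2 - A 2 0) * (A 0 2 - A 2 0) := by
    linear_combination (-1 : ℝ) * hr00 + hc11 + (-1 : ℝ) * hr22 + (-2/1 : ℝ) * hf11
  have hm0_23 : (A 1 2 + A 2 1) * (1 + A 0 0 + A 1 1 + A 2 2) = (A 0 2 - A 2 0) * (A 1 0 - A 0 1) := by
    linear_combination hr12 + hc12 + (-1 : ℝ) * hf12 + (-1 : ℝ) * hf21
  have hm0_33 : (1 - A 0 0 - A 1 1 + A 2 2) * (1 + A 0 0 + A 1 1 + A 2 2) = (A 1 0 - A 0 1) * (A 1 0 - A 0 1) := by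
    linear_combination (-1 : ℝ) * hc00 + (-1 : ℝ) * hc11 + hr22 + (-2/1 : ℝ) * hf22
  have hm1_00 : (1 + A 0 0 + A 1 1 + A 2 2) * (1 + A 0 0 - A 1 1 - A 2 2) = (A 2 1 - A 1 2) * (A 2 1 - A 1 2) := by
    linear_combination hc00 + (-1 : ℝ) * hr11 + (-1 : ℝ) * hr22 + (-2/1 : ℝ) * hf00
  have hm1_02 : (A 0 2 - A 2 0) * (1 + A 0 0 - A 1 1 - A 2 2) = (A 2 1 - A 1 2) * (A 0 1 + A 1 0) := by
    linear_combination (-1 : ℝ) * hr02 + hc02 + hf02 + (-1 : ℝ) * hf20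
  have hm1_03 : (A 1 0 - A 0 1) * (1 + A 0 0 - A 1 1 - A 2 2) = (A 2 1 - A 1 2) * (A 0 2 + A 2 0) := by
    linear_combination hr01 + (-1 : ℝ) * hc01 + (-1 : ℝ) * hf01 + hf10
  have hm1_22 : (1 - A 0 0 + A 1 1 - A 2 2) * (1 + A 0 0 - A 1 1 - A 2 2) = (A 0 1 + A 1 0) * (A 0 1 + A 1 0) := by
    linear_combination (-1 : ℝ) * hc00 + (-1 : ℝ) * hc11 + hr22 + (2/1 : ℝ) * hf22
  have hm1_23 : (A 1 2 + A 2 1) * (1 + A 0 0 - A 1 1 - A 2 2) = (A 0 1 + A 1 0) * (A 0 2 + A 2 0) := by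
    linear_combination (-1 : ℝ) * hr12 + (-1 : ℝ) * hc12 + (-1 : ℝ) * hf12 + (-1 : ℝ) * hf21
  have hm1_33 : (1 - A 0 0 - A 1 1 + A 2 2) * (1 + A 0 0 - A 1 1 - A 2 2) = (A 0 2 + A 2 0) * (A 0 2 + A 2 0) := by
    linear_combination (-1 : ℝ) * hr00 + hc11 + (-1 : ℝ) * hr22 + (2/1 : ℝ) * hf11
  have hm2_00 : (1 + A 0 0 + A 1 1 + A 2 2) * (1 - A 0 0 + A 1 1 - A 2 2) = (A 0 2 - A 2 0) * (A 0 2 - A 2 0) := by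
    linear_combination (-1 : ℝ) * hr00 + hc11 + (-1 : ℝ) * hr22 + (-2/1 : ℝ) * hf11
  have hm2_01 : (A 2 1 - A 1 2) * (1 - A 0 0 + A 1 1 - A 2 2) = (A 0 2 - A 2 0) * (A 0 1 + A 1 0) := by
    linear_combination hr12 + (-1 : ℝ) * hc12 + (-1 : ℝ) * hf12 + hf21
  have hm2_03 : (A 1 0 - A 0 1) * (1 - A 0 0 + A 1 1 - A 2 2) = (A 0 2 - A 2 0) * (A 1 2 + A 2 1) := by
    linear_combination (-1 : ℝ) * hr01 + hc01 + (-1 : ℝ) * hf01 + hf10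
  have hm2_11 : (1 + A 0 0 - A 1 1 - A 2 2) * (1 - A 0 0 + A 1 1 - A 2 2) = (A 0 1 + A 1 0) * (A 0 1 + A 1 0) := by
    linear_combination (-1 : ℝ) * hc00 + (-1 : ℝ) * hc11 + hr22 + (2/1 : ℝ) * hf22
  have hm2_13 : (A 0 2 + A 2 0) * (1 - A 0 0 + A 1 1 - A 2 2) = (A 0 1 + A 1 0) * (A 1 2 + A 2 1) := by
    linear_combination (-1 : ℝ) * hr02 + (-1 : ℝ) * hc02 + (-1 : ℝ) * hf02 + (-1 : ℝ) * hf20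
  have hm2_33 : (1 - A 0 0 - A 1 1 + A 2 2) * (1 - A 0 0 + A 1 1 - A 2 2) = (A 1 2 + A 2 1) * (A 1 2 + A 2 1) := by
    linear_combination hc00 + (-1 : ℝ) * hr11 + (-1 : ℝ) * hr22 + (2/1 : ℝ) * hf00
  have hm3_00 : (1 + A 0 0 + A 1 1 + A 2 2) * (1 - A 0 0 - A 1 1 + A 2 2) = (A 1 0 - A 0 1) * (A 1 0 - A 0 1) := by
    linear_combination (-1 : ℝ) * hc00 + (-1 : ℝ) * hc11 + hr22 + (-2/1 : ℝ) * hf22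
  have hm3_01 : (A 2 1 - A 1 2) * (1 - A 0 0 - A 1 1 + A 2 2) = (A 1 0 - A 0 1) * (A 0 2 + A 2 0) := by
    linear_combination (-1 : ℝ) * hr12 + hc12 + (-1 : ℝ) * hf12 + hf21
  have hm3_02 : (A 0 2 - A 2 0) * (1 - A 0 0 - A 1 1 + A 2 2) = (A 1 0 - A 0 1) * (A 1 2 + A 2 1) := by
    linear_combination hr02 + (-1 : ℝ) * hc02 + hf02 + (-1 : ℝ) * hf20
  have hm3_11 : (1 + A 0 0 - A 1 1 - A 2 2) * (1 - A 0 0 - A 1 1 + A 2 2) = (A 0 2 + A 2 0) * (A 0 2 + A 2 0) := by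
    linear_combination (-1 : ℝ) * hr00 + hc11 + (-1 : ℝ) * hr22 + (2/1 : ℝ) * hf11
  have hm3_12 : (A 0 1 + A 1 0) * (1 - A 0 0 - A 1 1 + A 2 2) = (A 0 2 + A 2 0) * (A 1 2 + A 2 1) := by
    linear_combination (-1 : ℝ) * hr01 + (-1 : ℝ) * hc01 + (-1 : ℝ) * hf01 + (-1 : ℝ) * hf10
  have hm3_22 : (1 - A 0 0 + A 1 1 - A 2 2) * (1 - A 0 0 - A 1 1 + A 2 2) = (A 1 2 + A 2 1) * (A 1 2 + A 2 1) := by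
    linear_combination hc00 + (-1 : ℝ) * hr11 + (-1 : ℝ) * hr22 + (2/1 : ℝ) * hf00

  obtain hk | hk | hk | hk :
      0 < (1 + A 0 0 + A 1 1 + A 2 2) ∨ 0 < (1 + A 0 0 - A 1 1 - A 2 2) ∨
      0 < (1 - A 0 0 + A 1 1 - A 2 2) ∨ 0 < (1 - A 0 0 - A 1 1 + A 2 2) := by
    by_contra hcon
    push_neg at hcon
    obtain ⟨h1, h2, h3, h4⟩ := hcon
    linarith
  · -- case k = 0
    have hss : Real.sqrt (1 + A 0 0 + A 1 1 + A 2 2) * Real.sqrt (1 + A 0 0 + A 1 1 + A 2 2) = (1 + A 0 0 + A 1 1 + A 2 2) := Real.mul_self_sqrt hk.le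
    have hs0 : Real.sqrt (1 + A 0 0 + A 1 1 + A 2 2) ≠ 0 := ne_of_gt (Real.sqrt_pos.mpr hk)
    refine ⟨⟨Real.sqrt (1 + A 0 0 + A 1 1 + A 2 2) / 2, (A 2 1 - A 1 2) / (2 * Real.sqrt (1 + A 0 0 + A 1 1 + A 2 2)), (A 0 2 - A 2 0) / (2 * Real.sqrt (1 + A 0 0 + A 1 1 + A 2 2)), (A 1 0 - A 0 1) / (2 * Real.sqrt (1 + A 0 0 + A 1 1 + A 2 2))⟩, buildQuat _ A ?_ ?_ ?_ ?_ ?_ ?_ ?_ ?_ ?_ ?_⟩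
    · exact hprod_kk _ _ hss
    · exact hprod_ki _ _ hs0
    · exact hprod_ki _ _ hs0
    · exact hprod_ki _ _ hs0
    · exact hprod_ij _ _ _ _ _ hss hk hm0_11
    · exact hprod_ij _ _ _ _ _ hss hk hm0_12
    · exact hprod_ij _ _ _ _ _ hss hk hm0_13
    · exact hprod_ij _ _ _ _ _ hss hk hm0_22
    · exact hprod_ij _ _ _ _ _ hss hk hm0_23
    · exact hprod_ij _ _ _ _ _ hss hk hm0_33
  · -- case k = 1
    have hss : Real.sqrt (1 + A 0 0 - A 1 1 - A 2 2) * Real.sqrt (1 + A 0 0 - A 1 1 - A 2 2) = (1 + A 0 0 - A 1 1 - A 2 2) := Real.mul_self_sqrt hk.le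
    have hs0 : Real.sqrt (1 + A 0 0 - A 1 1 - A 2 2) ≠ 0 := ne_of_gt (Real.sqrt_pos.mpr hk)
    refine ⟨⟨(A 2 1 - A 1 2) / (2 * Real.sqrt (1 + A 0 0 - A 1 1 - A 2 2)), Real.sqrt (1 + A 0 0 - A 1 1 - A 2 2) / 2, (A 0 1 + A 1 0) / (2 * Real.sqrt (1 + A 0 0 - A 1 1 - A 2 2)), (A 0 2 + A 2 0) / (2 * Real.sqrt (1 + A 0 0 - A 1 1 - A 2 2))⟩, buildQuat _ A ?_ ?_ ?_ ?_ ?_ ?_ ?_ ?_ ?_ ?_⟩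
    · exact hprod_ij _ _ _ _ _ hss hk hm1_00
    · exact hprod_ik _ _ hs0
    · exact hprod_ij _ _ _ _ _ hss hk hm1_02
    · exact hprod_ij _ _ _ _ _ hss hk hm1_03
    · exact hprod_kk _ _ hss
    · exact hprod_ki _ _ hs0
    · exact hprod_ki _ _ hs0
    · exact hprod_ij _ _ _ _ _ hss hk hm1_22
    · exact hprod_ij _ _ _ _ _ hss hk hm1_23
    · exact hprod_ij _ _ _ _ _ hss hk hm1_33
  · -- case k = 2
    have hss : Real.sqrt (1 - A 0 0 + A 1 1 - A 2 2) * Real.sqrt (1 - A 0 0 + A 1 1 - A 2 2) = (1 - A 0 0 + A 1 1 - A 2 2) := Real.mul_self_sqrt hk.le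
    have hs0 : Real.sqrt (1 - A 0 0 + A 1 1 - A 2 2) ≠ 0 := ne_of_gt (Real.sqrt_pos.mpr hk)
    refine ⟨⟨(A 0 2 - A 2 0) / (2 * Real.sqrt (1 - A 0 0 + A 1 1 - A 2 2)), (A 0 1 + A 1 0) / (2 * Real.sqrt (1 - A 0 0 + A 1 1 - A 2 2)), Real.sqrt (1 - A 0 0 + A 1 1 - A 2 2) / 2, (A 1 2 + A 2 1) / (2 * Real.sqrt (1 - A 0 0 + A 1 1 - A 2 2))⟩, buildQuat _ A ?_ ?_ ?_ ?_ ?_ ?_ ?_ ?_ ?_ ?_⟩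
    · exact hprod_ij _ _ _ _ _ hss hk hm2_00
    · exact hprod_ij _ _ _ _ _ hss hk hm2_01
    · exact hprod_ik _ _ hs0
    · exact hprod_ij _ _ _ _ _ hss hk hm2_03
    · exact hprod_ij _ _ _ _ _ hss hk hm2_11
    · exact hprod_ik _ _ hs0
    · exact hprod_ij _ _ _ _ _ hss hk hm2_13
    · exact hprod_kk _ _ hss
    · exact hprod_ki _ _ hs0
    · exact hprod_ij _ _ _ _ _ hss hk hm2_33
  · -- case k = 3
    have hss : Real.sqrt (1 - A 0 0 - A 1 1 + A 2 2) * Real.sqrt (1 - A 0 0 - A 1 1 + A 2 2) = (1 - A 0 0 - A 1 1 + A 2 2) := Real.mul_self_sqrt hk.le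
    have hs0 : Real.sqrt (1 - A 0 0 - A 1 1 + A 2 2) ≠ 0 := ne_of_gt (Real.sqrt_pos.mpr hk)
    refine ⟨⟨(A 1 0 - A 0 1) / (2 * Real.sqrt (1 - A 0 0 - A 1 1 + A 2 2)), (A 0 2 + A 2 0) / (2 * Real.sqrt (1 - A 0 0 - A 1 1 + A 2 2)), (A 1 2 + A 2 1) / (2 * Real.sqrt (1 - A 0 0 - A 1 1 + A 2 2)), Real.sqrt (1 - A 0 0 - A 1 1 + A 2 2) / 2⟩, buildQuat _ A ?_ ?_ ?_ ?_ ?_ ?_ ?_ ?_ ?_ ?_⟩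
    · exact hprod_ij _ _ _ _ _ hss hk hm3_00
    · exact hprod_ij _ _ _ _ _ hss hk hm3_01
    · exact hprod_ij _ _ _ _ _ hss hk hm3_02
    · exact hprod_ik _ _ hs0
    · exact hprod_ij _ _ _ _ _ hss hk hm3_11
    · exact hprod_ij _ _ _ _ _ hss hk hm3_12
    · exact hprod_ik _ _ hs0
    · exact hprod_ij _ _ _ _ _ hss hk hm3_22
    · exact hprod_ik _ _ hs0
    · exact hprod_kk _ _ hss

lemma sum_mulVec' {n ι : Type*} [Fintype n] (s : Finset ι) (M : ι → Matrix n n ℝ) (x : n → ℝ) :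
    (∑ m ∈ s, M m) *ᵥ x = ∑ m ∈ s, M m *ᵥ x := by
  ext i
  simp only [Matrix.mulVec, dotProduct, Finset.sum_apply, Matrix.sum_apply,
    Finset.sum_mul]
  rw [Finset.sum_comm]

lemma dotProduct_sum' {n ι : Type*} [Fintype n] (s : Finset ι) (x : n → ℝ) (v : ι → n → ℝ) :
    x ⬝ᵥ (∑ m ∈ s, v m) = ∑ m ∈ s, x ⬝ᵥ v m := by
  simp only [dotProduct, Finset.sum_apply, Finset.mul_sum]
  rw [Finset.sum_comm]

lemma vecMulVec_quad {n : Type*} [Fintype n] (v x : n → ℝ) :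
    x ⬝ᵥ (Matrix.vecMulVec v v *ᵥ x) = (v ⬝ᵥ x) ^ 2 := by
  simp only [dotProduct, Matrix.mulVec, Matrix.vecMulVec_apply, dotProduct]
  rw [sq, Finset.sum_mul]
  congr 1; ext i
  rw [Finset.mul_sum, Finset.mul_sum]
  congr 1; ext j; ring
lemma rayleigh {Q : Matrix (Fin 4) (Fin 4) ℝ} (hQ : Q.IsHermitian) {lam : ℝ}
    (hmax : ∀ (c : ℝ) (x : Fin 4 → ℝ), x ≠ 0 → Q *ᵥ x = c • x → c ≤ lam)
    (x : Fin 4 → ℝ) : x ⬝ᵥ (Q *ᵥ x) ≤ lam * (x ⬝ᵥ x) := by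
  classical
  have heval : ∀ i, hQ.eigenvalues i ≤ lam := by
    intro i
    refine hmax _ _ ?_ (hQ.mulVec_eigenvectorBasis i)
    intro h0
    have hz : hQ.eigenvectorBasis i = 0 := by
      ext j
      exact congrFun h0 j
    have hn : ‖hQ.eigenvectorBasis i‖ = 1 := hQ.eigenvectorBasis.orthonormal.1 i
    rw [hz, norm_zero] at hn
    exact zero_ne_one hn
  set U : Matrix (Fin 4) (Fin 4) ℝ := (hQ.eigenvectorUnitary : Matrix (Fin 4) (Fin 4) ℝ) with hU
  have hUU : U * Uᵀ = 1 := by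
    have := Matrix.mem_unitaryGroup_iff.mp (hQ.eigenvectorUnitary).2
    rwa [Matrix.star_eq_conjTranspose, Matrix.conjTranspose_eq_transpose_of_trivial] at this
  have hspec : Q = U * Matrix.diagonal hQ.eigenvalues * Uᵀ := by
    have := hQ.spectral_theorem
    rw [Unitary.conjStarAlgAut_apply, Matrix.star_eq_conjTranspose, Matrix.conjTranspose_eq_transpose_of_trivial] at this
    simpa [RCLike.ofReal_real_eq_id] using this
  set y : Fin 4 → ℝ := Uᵀ *ᵥ x with hy
  have hxU : x ᵥ* U = y := by rw [hy, ← Matrix.mulVec_transpose]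
  have hQx : Q *ᵥ x = U *ᵥ (Matrix.diagonal hQ.eigenvalues *ᵥ y) := by
    conv_lhs => rw [hspec]
    rw [← Matrix.mulVec_mulVec, ← Matrix.mulVec_mulVec, hy]
  have key1 : x ⬝ᵥ (Q *ᵥ x) = y ⬝ᵥ (Matrix.diagonal hQ.eigenvalues *ᵥ y) := by
    rw [hQx, Matrix.dotProduct_mulVec x U, hxU]
  have key2 : x ⬝ᵥ x = y ⬝ᵥ y := by
    have : y ⬝ᵥ y = x ⬝ᵥ (U *ᵥ (Uᵀ *ᵥ x)) := by
      rw [Matrix.dotProduct_mulVec x U, hxU, hy]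
    rw [this, Matrix.mulVec_mulVec, hUU, Matrix.one_mulVec]
  rw [key1, key2]
  simp only [dotProduct, Matrix.mulVec_diagonal, Finset.mul_sum]
  refine Finset.sum_le_sum fun i _ => ?_
  have h1 : y i * (hQ.eigenvalues i * y i) = hQ.eigenvalues i * (y i)^2 := by ring
  have h2 : lam * (y i * y i) = lam * (y i)^2 := by ring
  rw [h1, h2]
  exact mul_le_mul_of_nonneg_right (heval i) (sq_nonneg _)

lemma orth_trace_rigid (O S : Mat3) (hO : O * Oᵀ = 1) (hS : Sᵀ = S)
    (hpd : ∀ x : Fin 3 → ℝ, x ≠ 0 → 0 < x ⬝ᵥ (S *ᵥ x))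
    (htr : S.trace ≤ (O * S).trace) : O = 1 := by
  classical
  set Nm : Mat3 := 1 - O with hNm
  -- Nm * Nmᵀ = 2•1 - O - Oᵀ
  have hNN : Nm * Nmᵀ = (2 : ℝ) • (1 : Mat3) - O - Oᵀ := by
    rw [hNm, Matrix.transpose_sub, Matrix.transpose_one, Matrix.sub_mul, Matrix.mul_sub,
      Matrix.mul_sub, Matrix.one_mul, Matrix.one_mul, Matrix.mul_one, hO]
    ext i j
    by_cases h : i = j <;>
      simp [Matrix.sub_apply, Matrix.smul_apply, Matrix.one_apply, h] <;> ring
  -- trace(S * Oᵀ) = trace(O * S)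
  have htrOT : (S * Oᵀ).trace = (O * S).trace := by
    rw [← Matrix.trace_transpose, Matrix.transpose_mul, Matrix.transpose_transpose, hS]
  -- trace (Nmᵀ * (S * Nm)) ≤ 0
  have htr2 : (Nmᵀ * (S * Nm)).trace ≤ 0 := by
    have h1 : (Nmᵀ * (S * Nm)).trace = (S * (Nm * Nmᵀ)).trace := by
      rw [Matrix.trace_mul_comm, Matrix.mul_assoc]
    have h2 : (S * (Nm * Nmᵀ)).trace = 2 * S.trace - (O * S).trace - (O * S).trace := by
      rw [hNN]
      rw [Matrix.mul_sub, Matrix.mul_sub, Matrix.trace_sub, Matrix.trace_sub, htrOT,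
        Matrix.mul_smul, Matrix.mul_one, Matrix.trace_smul, Matrix.trace_mul_comm S O]
      simp
    rw [h1, h2]
    linarith
  -- diagonal entries are quadratic forms
  have hdiag : ∀ j, (Nmᵀ * (S * Nm)) j j = (fun i => Nm i j) ⬝ᵥ (S *ᵥ fun i => Nm i j) := by
    intro j
    simp only [Matrix.mul_apply, Matrix.transpose_apply, dotProduct, Matrix.mulVec,
      dotProduct]
  have hnonneg : ∀ j : Fin 3, 0 ≤ (Nmᵀ * (S * Nm)) j j := by
    intro j
    rw [hdiag]
    by_cases h : (fun i => Nm i j) = 0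
    · rw [h]; simp
    · exact (hpd _ h).le
  have hzero : ∀ j : Fin 3, (Nmᵀ * (S * Nm)) j j = 0 := by
    have hsum : ∑ j, (Nmᵀ * (S * Nm)) j j ≤ 0 := htr2
    intro j
    have := Finset.sum_eq_zero_iff_of_nonneg (fun i _ => hnonneg i) |>.mp
      (le_antisymm hsum (Finset.sum_nonneg fun i _ => hnonneg i))
    exact this j (Finset.mem_univ j)
  have hcol : ∀ j, (fun i => Nm i j) = 0 := by
    intro j
    by_contra h
    have := hpd _ h
    rw [← hdiag] at this
    exact absurd (hzero j) (ne_of_gt this)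
  ext i j
  have := congrFun (hcol j) i
  simp only [Pi.zero_apply, hNm, Matrix.sub_apply, Matrix.one_apply] at this
  simp only [Matrix.one_apply]
  linarith

theorem averaging_equivalence (N : ℕ) (q : Fin N → Quaternion ℝ) (hq : ∀ m, ‖q m‖ = 1)
    (w : Fin N → ℝ) (hw : ∀ m, 0 ≤ w m)
    (J : Mat3) (hJ : J = ∑ m, w m • Phi (q m))
    (Q : Matrix (Fin 4) (Fin 4) ℝ)
    (hQ : Q = ∑ m, w m •
      (Matrix.vecMulVec (qcomp (q m)) (qcomp (q m)) -
        (1 / 4 : ℝ) • (1 : Matrix (Fin 4) (Fin 4) ℝ)))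
    (hdet : 0 < J.det)
    (qbar : Quaternion ℝ) (hqbar : ‖qbar‖ = 1) (lam : ℝ)
    (heig : Q *ᵥ qcomp qbar = lam • qcomp qbar)
    (hmax : ∀ (c : ℝ) (x : Fin 4 → ℝ), x ≠ 0 → Q *ᵥ x = c • x → c ≤ lam) :
    ∀ A S : Mat3, Aᵀ * A = 1 → Sᵀ = S →
      (∀ x : Fin 3 → ℝ, x ≠ 0 → 0 < x ⬝ᵥ (S *ᵥ x)) → J = A * S →
      Phi qbar = A := by
  intro A S hAo hSsym hSpd hJAS
  have hnq : ∀ m, Quaternion.normSq (q m) = 1 := fun m => by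
    rw [Quaternion.normSq_eq_norm_mul_self, hq m, one_mul]
  have hnqbar : Quaternion.normSq qbar = 1 := by
    rw [Quaternion.normSq_eq_norm_mul_self, hqbar, one_mul]
  have hqcomp_self : ∀ p : Quaternion ℝ, qcomp p ⬝ᵥ qcomp p = Quaternion.normSq p := by
    intro p
    simp [qcomp, dotProduct, Fin.sum_univ_four, Quaternion.normSq_def']
    ring
  have hqcomp_dot : ∀ u p : Quaternion ℝ, qcomp u ⬝ᵥ qcomp p = qdot p u := by
    intro u p
    simp [qcomp, qdot, dotProduct, Fin.sum_univ_four]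
    ring
  -- the trace formula
  have htrace : ∀ p : Quaternion ℝ, Quaternion.normSq p = 1 →
      ((Phi p)ᵀ * J).trace = 4 * (qcomp p ⬝ᵥ (Q *ᵥ qcomp p)) := by
    intro p hp
    have hxx : qcomp p ⬝ᵥ qcomp p = 1 := by rw [hqcomp_self, hp]
    have hR : qcomp p ⬝ᵥ (Q *ᵥ qcomp p)
        = ∑ m, w m * ((qdot p (q m)) ^ 2 - 1 / 4) := by
      rw [hQ, sum_mulVec', dotProduct_sum']
      refine Finset.sum_congr rfl fun m _ => ?_
      rw [Matrix.smul_mulVec, dotProduct_smul, Matrix.sub_mulVec,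
        dotProduct_sub, vecMulVec_quad, Matrix.smul_mulVec, Matrix.one_mulVec,
        dotProduct_smul, hxx, hqcomp_dot]
      simp [smul_eq_mul]
    rw [hJ, Matrix.mul_sum, Matrix.trace_sum, hR, Finset.mul_sum]
    refine Finset.sum_congr rfl fun m _ => ?_
    rw [Matrix.mul_smul, Matrix.trace_smul, trace_Phi_mul, hp, hnq m]
    simp [smul_eq_mul]
    ring
  -- Q is symmetric
  have hQher : Q.IsHermitian := by
    rw [Matrix.IsHermitian, Matrix.conjTranspose_eq_transpose_of_trivial, hQ,
      Matrix.transpose_sum]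
    refine Finset.sum_congr rfl fun m _ => ?_
    rw [Matrix.transpose_smul, Matrix.transpose_sub, Matrix.transpose_smul,
      Matrix.transpose_one]
    congr 1
    ext i j
    simp [Matrix.vecMulVec_apply, mul_comm]
  -- S is positive definite, hence has positive determinant
  have hSher : S.IsHermitian := by
    rw [Matrix.IsHermitian, Matrix.conjTranspose_eq_transpose_of_trivial, hSsym]
  have hSpos : S.PosDef := Matrix.posDef_iff_dotProduct_mulVec.mpr ⟨hSher, fun x hx => by simpa using hSpd x hx⟩
  have hdetS : 0 < S.det := hSpos.det_pos
  -- A has determinant 1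
  have hdetA : A.det = 1 := by
    have h2 : A.det * A.det = 1 := by
      have := congrArg Matrix.det hAo
      rwa [Matrix.det_mul, Matrix.det_transpose, Matrix.det_one] at this
    rcases mul_self_eq_one_iff.mp h2 with h | h
    · exact h
    · exfalso
      rw [hJAS, Matrix.det_mul, h] at hdet
      nlinarith
  obtain ⟨p, hp1, hpA⟩ := exists_phi A hAo hdetA
  -- value at the maximizer
  have e1 : ((Phi qbar)ᵀ * J).trace = 4 * lam := by
    rw [htrace qbar hnqbar, heig, dotProduct_smul, hqcomp_self, hnqbar]
    simp
  -- value of the polar factor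
  have e2 : S.trace ≤ ((Phi qbar)ᵀ * J).trace := by
    have h3 : (Aᵀ * J).trace = S.trace := by
      rw [hJAS, ← Matrix.mul_assoc, hAo, Matrix.one_mul]
    have h4 : (Aᵀ * J).trace = 4 * (qcomp p ⬝ᵥ (Q *ᵥ qcomp p)) := by
      rw [← hpA]
      exact htrace p hp1
    have h5 : qcomp p ⬝ᵥ (Q *ᵥ qcomp p) ≤ lam := by
      have := rayleigh hQher hmax (qcomp p)
      rwa [hqcomp_self, hp1, mul_one] at this
    rw [e1, ← h3, h4]
    linarith
  -- rigidity
  have hPhiorth : (Phi qbar)ᵀ * Phi qbar = 1 := Phi_orthogonal qbar hnqbar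
  have hPhiO : Phi qbar * (Phi qbar)ᵀ = 1 := mul_eq_one_comm.mp hPhiorth
  have hAAT : A * Aᵀ = 1 := mul_eq_one_comm.mp hAo
  have hOorth : ((Phi qbar)ᵀ * A) * ((Phi qbar)ᵀ * A)ᵀ = 1 := by
    rw [Matrix.transpose_mul, Matrix.transpose_transpose, Matrix.mul_assoc,
      ← Matrix.mul_assoc A Aᵀ (Phi qbar), hAAT, Matrix.one_mul, hPhiorth]
  have htrfin : S.trace ≤ (((Phi qbar)ᵀ * A) * S).trace := by
    rw [Matrix.mul_assoc, ← hJAS]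
    exact e2
  have hO1 : (Phi qbar)ᵀ * A = 1 := orth_trace_rigid _ S hOorth hSsym hSpd htrfin
  calc Phi qbar = Phi qbar * 1 := (Matrix.mul_one _).symm
    _ = Phi qbar * ((Phi qbar)ᵀ * A) := by rw [hO1]
    _ = (Phi qbar * (Phi qbar)ᵀ) * A := by rw [Matrix.mul_assoc]
    _ = 1 * A := by rw [hPhiO]
    _ = A := Matrix.one_mul A
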